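/- Let (Ω, 𝔽, P) be a probability space, X : Ω → ℝ^d a random vector, Y : Ω → ℝ a random variable, β* ∈ ℝ^d, τ ∈ (0,1), and ε = Y − ⟨X, β*⟩. Let K : ℝ → ℝ be a nonnegative measurable function with K(ε) > 0 almost surely, and define X̃ = √(K(ε)) · X and Ỹ = ⟨X̃, β*⟩ − (𝟙{ε ≤ 0} − τ)/√(K(ε)). Assume that (Ỹ − ⟨X̃, β⟩)² is integrable for every β ∈ ℝ^d, that the matrix E[K(ε) X Xᵀ] is positive definite, and that E[(𝟙{ε ≤ 0} − τ) X] = 0. Then β* is the unique global minimizer over ℝ^d of the function β ↦ E[(Ỹ − ⟨X̃, β⟩)²]; that is, E[(Ỹ − ⟨X̃, β⟩)²] > E[(Ỹ − ⟨X̃, β*⟩)²] for every β ≠ β*. -/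

import Mathlib

open MeasureTheory

/-- `β*` is the unique global minimizer of the population least-squares risk
`β ↦ E[(Ỹ - ⟨X̃, β⟩)²]` of the Newton-type transformed quantile regression problem. -/
theorem newton_transform_unique_minimizer
    {Ω : Type*} [MeasurableSpace Ω] (μ : Measure Ω) [IsProbabilityMeasure μ]
    {d : ℕ} (X : Ω → Fin d → ℝ) (Y : Ω → ℝ) (βs : Fin d → ℝ)
    (τ : ℝ) (hτ : τ ∈ Set.Ioo (0:ℝ) 1)
    (ε : Ω → ℝ) (hε : ∀ ω, ε ω = Y ω - ∑ j, X ω j * βs j)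
    (K : ℝ → ℝ) (hKmeas : Measurable K) (hKnonneg : ∀ u, 0 ≤ K u)
    (hKpos : ∀ᵐ ω ∂μ, 0 < K (ε ω))
    (Xt : Ω → Fin d → ℝ) (hXt : ∀ ω j, Xt ω j = Real.sqrt (K (ε ω)) * X ω j)
    (Yt : Ω → ℝ)
    (hYt : ∀ ω, Yt ω = (∑ j, Xt ω j * βs j) -
      ((if ε ω ≤ 0 then (1:ℝ) else 0) - τ) / Real.sqrt (K (ε ω)))
    (hint : ∀ β : Fin d → ℝ,
      Integrable (fun ω => (Yt ω - ∑ j, Xt ω j * β j) ^ 2) μ)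
    (hposdef : (Matrix.of fun i j => ∫ ω, K (ε ω) * (X ω i * X ω j) ∂μ).PosDef)
    (hscore : ∀ i, ∫ ω, ((if ε ω ≤ 0 then (1:ℝ) else 0) - τ) * X ω i ∂μ = 0) :
    ∀ β : Fin d → ℝ, β ≠ βs →
      (∫ ω, (Yt ω - ∑ j, Xt ω j * βs j) ^ 2 ∂μ) <
        ∫ ω, (Yt ω - ∑ j, Xt ω j * β j) ^ 2 ∂μ := by
  intro β hβ
  set e : Ω → ℝ := fun ω => Yt ω - ∑ j, Xt ω j * βs j with he
  -- sums split
  have hsum_sub : ∀ (ω : Ω) (v w : Fin d → ℝ),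
      ∑ j, Xt ω j * (v j - w j) = (∑ j, Xt ω j * v j) - ∑ j, Xt ω j * w j := by
    intro ω v w
    rw [← Finset.sum_sub_distrib]
    exact Finset.sum_congr rfl fun j _ => by ring
  have hsum_add : ∀ (ω : Ω) (v w : Fin d → ℝ),
      ∑ j, Xt ω j * (v j + w j) = (∑ j, Xt ω j * v j) + ∑ j, Xt ω j * w j := by
    intro ω v w
    rw [← Finset.sum_add_distrib]
    exact Finset.sum_congr rfl fun j _ => by ring
  -- basic integrability of (e ± B_v)^2
  have hplus : ∀ v : Fin d → ℝ,
      Integrable (fun ω => (e ω + ∑ j, Xt ω j * v j) ^ 2) μ := by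
    intro v
    refine (hint (fun j => βs j - v j)).congr (Filter.Eventually.of_forall fun ω => ?_)
    dsimp only
    rw [hsum_sub ω βs v]; ring
  have hminus : ∀ v : Fin d → ℝ,
      Integrable (fun ω => (e ω - ∑ j, Xt ω j * v j) ^ 2) μ := by
    intro v
    refine (hint (fun j => βs j + v j)).congr (Filter.Eventually.of_forall fun ω => ?_)
    dsimp only
    rw [hsum_add ω βs v]; ring
  have h0 : Integrable (fun ω => e ω ^ 2) μ := hint βs
  -- integrability of B_v^2 and e * B_v
  have hB2 : ∀ v : Fin d → ℝ,
      Integrable (fun ω => (∑ j, Xt ω j * v j) ^ 2) μ := by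
    intro v
    have h := ((((hplus v).add (hminus v)).div_const 2).sub h0)
    refine h.congr (Filter.Eventually.of_forall fun ω => ?_)
    simp only [Pi.add_apply, Pi.sub_apply]
    ring
  have heB : ∀ v : Fin d → ℝ,
      Integrable (fun ω => e ω * (∑ j, Xt ω j * v j)) μ := by
    intro v
    have h := (((hplus v).sub (hminus v)).div_const 4)
    refine h.congr (Filter.Eventually.of_forall fun ω => ?_)
    simp only [Pi.add_apply, Pi.sub_apply]
    ring
  -- integrability of products Xt i * Xt j
  have hsingle : ∀ (ω : Ω) (i : Fin d),
      ∑ j, Xt ω j * (if j = i then (1:ℝ) else 0) = Xt ω i := by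
    intro ω i
    simp [mul_ite, Finset.sum_ite_eq']
  have hI2 : ∀ i j : Fin d, Integrable (fun ω => Xt ω i * Xt ω j) μ := by
    intro i j
    have h1 := hB2 (fun k => (if k = i then (1:ℝ) else 0) + (if k = j then (1:ℝ) else 0))
    have h2 := hB2 (fun k => if k = i then (1:ℝ) else 0)
    have h3 := hB2 (fun k => if k = j then (1:ℝ) else 0)
    have h := (((h1.sub h2).sub h3).div_const 2)
    refine h.congr (Filter.Eventually.of_forall fun ω => ?_)
    simp only [Pi.add_apply, Pi.sub_apply]
    rw [hsum_add ω _ _, hsingle ω i, hsingle ω j]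
    ring
  have hI1 : ∀ i : Fin d, Integrable (fun ω => e ω * Xt ω i) μ := by
    intro i
    have h := heB (fun k => if k = i then (1:ℝ) else 0)
    refine h.congr (Filter.Eventually.of_forall fun ω => ?_)
    dsimp only
    rw [hsingle ω i]
  -- the score integrals vanish
  have hsz : ∀ i : Fin d, ∫ ω, e ω * Xt ω i ∂μ = 0 := by
    intro i
    have hae : (fun ω => e ω * Xt ω i) =ᵐ[μ]
        (fun ω => -((((if ε ω ≤ 0 then (1:ℝ) else 0) - τ)) * X ω i)) := by
      filter_upwards [hKpos] with ω hK
      have hs : Real.sqrt (K (ε ω)) ≠ 0 := ne_of_gt (Real.sqrt_pos.mpr hK)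
      simp only [he, hYt ω, hXt ω i]
      field_simp
      ring
    rw [integral_congr_ae hae, integral_neg, hscore i, neg_zero]
  -- products Xt i * Xt j equal K * (X i * X j)
  have hprodeq : ∀ (ω : Ω) (i j : Fin d),
      Xt ω i * Xt ω j = K (ε ω) * (X ω i * X ω j) := by
    intro ω i j
    rw [hXt ω i, hXt ω j, mul_mul_mul_comm, Real.mul_self_sqrt (hKnonneg _)]
  -- the direction δ
  set δ : Fin d → ℝ := fun j => βs j - β j with hδdef
  have hδ : δ ≠ 0 := by
    intro h
    apply hβ
    funext j
    have := congrFun h j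
    simp only [hδdef, Pi.zero_apply] at this
    linarith
  set B : Ω → ℝ := fun ω => ∑ j, Xt ω j * δ j with hB
  -- integral of e * B is zero
  have hIeB : ∫ ω, e ω * B ω ∂μ = 0 := by
    have h1 : (fun ω => e ω * B ω) = fun ω => ∑ j, δ j * (e ω * Xt ω j) := by
      funext ω
      rw [hB, Finset.mul_sum]
      exact Finset.sum_congr rfl fun j _ => by ring
    rw [h1, integral_finset_sum _ (fun j _ => (hI1 j).const_mul (δ j))]
    refine Finset.sum_eq_zero fun j _ => ?_
    rw [integral_const_mul, hsz j, mul_zero]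
  -- integral of B^2 is the quadratic form
  have hIB2 : ∫ ω, B ω ^ 2 ∂μ =
      ∑ i, ∑ j, δ i * δ j * ∫ ω, K (ε ω) * (X ω i * X ω j) ∂μ := by
    have h1 : (fun ω => B ω ^ 2) =
        fun ω => ∑ i, ∑ j, δ i * δ j * (Xt ω i * Xt ω j) := by
      funext ω
      rw [hB, sq, Finset.sum_mul_sum]
      exact Finset.sum_congr rfl fun i _ => Finset.sum_congr rfl fun j _ => by ring
    rw [h1, integral_finset_sum _ (fun i _ =>
      integrable_finset_sum _ (fun j _ => (hI2 i j).const_mul _))]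
    refine Finset.sum_congr rfl fun i _ => ?_
    rw [integral_finset_sum _ (fun j _ => (hI2 i j).const_mul _)]
    refine Finset.sum_congr rfl fun j _ => ?_
    rw [integral_const_mul]
    congr 1
    exact integral_congr_ae (Filter.Eventually.of_forall fun ω => hprodeq ω i j)
  -- positivity of the quadratic form
  have hpos : 0 < ∑ i, ∑ j, δ i * δ j * ∫ ω, K (ε ω) * (X ω i * X ω j) ∂μ := by
    have h := hposdef.dotProduct_mulVec_pos hδ
    rw [star_trivial] at h
    have heq : dotProduct δ
        ((Matrix.of fun i j => ∫ ω, K (ε ω) * (X ω i * X ω j) ∂μ).mulVec δ)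
        = ∑ i, ∑ j, δ i * δ j * ∫ ω, K (ε ω) * (X ω i * X ω j) ∂μ := by
      simp only [dotProduct, Matrix.mulVec, Matrix.of_apply, Finset.mul_sum]
      exact Finset.sum_congr rfl fun i _ => Finset.sum_congr rfl fun j _ => by ring
    rw [heq] at h
    exact h
  -- put it together
  have hdiff : (∫ ω, (Yt ω - ∑ j, Xt ω j * β j) ^ 2 ∂μ)
      - (∫ ω, (Yt ω - ∑ j, Xt ω j * βs j) ^ 2 ∂μ)
      = ∫ ω, (2 * (e ω * B ω) + B ω ^ 2) ∂μ := by
    rw [← integral_sub (hint β) (hint βs)]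
    refine integral_congr_ae (Filter.Eventually.of_forall fun ω => ?_)
    have hsb : ∑ j, Xt ω j * β j = (∑ j, Xt ω j * βs j) - B ω := by
      simp only [hB, hδdef]
      rw [hsum_sub ω βs β]; ring
    simp only [hsb, he]
    ring
  have hsplit : ∫ ω, (2 * (e ω * B ω) + B ω ^ 2) ∂μ
      = 2 * (∫ ω, e ω * B ω ∂μ) + ∫ ω, B ω ^ 2 ∂μ := by
    rw [integral_add ((heB δ).const_mul 2) (hB2 δ), integral_const_mul]
  have : (∫ ω, (Yt ω - ∑ j, Xt ω j * β j) ^ 2 ∂μ)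
      - (∫ ω, (Yt ω - ∑ j, Xt ω j * βs j) ^ 2 ∂μ) > 0 := by
    rw [hdiff, hsplit, hIeB, hIB2]
    linarith
  linarith
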